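/- Let M and M' be symmetric real (p+d)×(p+d) matrices written in block form M = [[M_xx, M_xy],[M_yx, M_yy]] and M' = [[M'_xx, M'_xy],[M'_yx, M'_yy]], where M_xx is p×p and M_yy is d×d and invertible. Set C = M_yy⁻¹ M_yx ∈ ℝ^{d×p} and T = [I_p; −C] ∈ ℝ^{(p+d)×p} (identity stacked over −C). Then for every ℓ ∈ {1, …, p}, the eigenvalues (sorted in nondecreasing order) of the symmetric p×p matrices TᵀMT and TᵀM'T satisfy |λ_ℓ(TᵀMT) − λ_ℓ(TᵀM'T)| ≤ (1 + ‖M_xy‖·‖M_yy⁻¹‖)² · ‖M − M'‖, where all matrix norms are spectral norms. -/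

import Mathlib

/-!
STATEMENT 6: Projected Weyl envelope.

Matrices are indexed by `Fin p ⊕ Fin d` and spectral (ℓ²-operator) norms are provided by the
scoped instances of `Matrix.L2OpNorm`.  `λ_ℓ(·)` denotes the ℓ-th smallest eigenvalue of a
real symmetric matrix, obtained by sorting `Matrix.IsHermitian.eigenvalues` in nondecreasing
order via `Tuple.sort`.
-/

open scoped Matrix.Norms.L2Operator

noncomputable section

/-- The eigenvalues of a real symmetric matrix, sorted in nondecreasing order. -/
def sortedEigenvalues {n : ℕ} {M : Matrix (Fin n) (Fin n) ℝ} (hM : M.IsHermitian) :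
    Fin n → ℝ :=
  hM.eigenvalues ∘ Tuple.sort hM.eigenvalues

namespace ProjectedWeylAux

open scoped InnerProductSpace

variable {n : ℕ}

lemma repr_zero (b : OrthonormalBasis (Fin n) ℝ (EuclideanSpace ℝ (Fin n)))
    (S : Finset (Fin n)) {x : EuclideanSpace ℝ (Fin n)}
    (hx : x ∈ Submodule.span ℝ (b '' (S : Set (Fin n)))) {i : Fin n} (hi : i ∉ S) :
    b.repr x i = 0 := by
  rw [b.repr_apply_apply]
  induction hx using Submodule.span_induction with
  | mem y hy =>
    obtain ⟨j, hj, rfl⟩ := hy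
    exact b.orthonormal.2 (fun h => hi (h ▸ hj))
  | zero => simp
  | add y z _ _ hy hz => rw [inner_add_right, hy, hz]; ring
  | smul c y _ hy => rw [inner_smul_right, hy]; ring

lemma eig_apply {A : Matrix (Fin n) (Fin n) ℝ} (hA : A.IsHermitian) (i : Fin n) :
    Matrix.toEuclideanLin A (hA.eigenvectorBasis i)
      = hA.eigenvalues i • hA.eigenvectorBasis i := by
  have := hA.mulVec_eigenvectorBasis i
  apply (WithLp.equiv 2 (Fin n → ℝ)).injective
  simp [Matrix.toEuclideanLin_apply, this]

lemma quad_eq {A : Matrix (Fin n) (Fin n) ℝ} (hA : A.IsHermitian) (x : EuclideanSpace ℝ (Fin n)) :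
    ⟪x, Matrix.toEuclideanLin A x⟫_ℝ
      = ∑ i, hA.eigenvalues i * (hA.eigenvectorBasis.repr x i) ^ 2 := by
  set b := hA.eigenvectorBasis with hb
  have hAx : Matrix.toEuclideanLin A x
      = ∑ i, (b.repr x i * hA.eigenvalues i) • b i := by
    conv_lhs => rw [← b.sum_repr x, map_sum]
    refine Finset.sum_congr rfl fun i _ => ?_
    rw [map_smul, eig_apply hA i, ← hb, smul_smul]
  rw [hAx, inner_sum]
  refine Finset.sum_congr rfl fun i _ => ?_
  rw [inner_smul_right, real_inner_comm, ← b.repr_apply_apply]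
  ring

lemma norm_sq_eq (b : OrthonormalBasis (Fin n) ℝ (EuclideanSpace ℝ (Fin n)))
    (x : EuclideanSpace ℝ (Fin n)) :
    ‖x‖ ^ 2 = ∑ i, (b.repr x i) ^ 2 := by
  rw [← b.repr.norm_map x, EuclideanSpace.norm_eq, Real.sq_sqrt (by positivity)]
  simp [sq]

lemma quad_ge {A : Matrix (Fin n) (Fin n) ℝ} (hA : A.IsHermitian) (S : Finset (Fin n)) (c : ℝ)
    (hc : ∀ i ∈ S, c ≤ hA.eigenvalues i) {x : EuclideanSpace ℝ (Fin n)}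
    (hx : x ∈ Submodule.span ℝ (hA.eigenvectorBasis '' (S : Set (Fin n)))) :
    c * ‖x‖ ^ 2 ≤ ⟪x, Matrix.toEuclideanLin A x⟫_ℝ := by
  rw [quad_eq hA x, norm_sq_eq hA.eigenvectorBasis x, Finset.mul_sum]
  refine Finset.sum_le_sum fun i _ => ?_
  by_cases hi : i ∈ S
  · exact mul_le_mul_of_nonneg_right (hc i hi) (sq_nonneg _)
  · rw [repr_zero _ _ hx hi]; simp

lemma quad_le {A : Matrix (Fin n) (Fin n) ℝ} (hA : A.IsHermitian) (S : Finset (Fin n)) (c : ℝ)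
    (hc : ∀ i ∈ S, hA.eigenvalues i ≤ c) {x : EuclideanSpace ℝ (Fin n)}
    (hx : x ∈ Submodule.span ℝ (hA.eigenvectorBasis '' (S : Set (Fin n)))) :
    ⟪x, Matrix.toEuclideanLin A x⟫_ℝ ≤ c * ‖x‖ ^ 2 := by
  rw [quad_eq hA x, norm_sq_eq hA.eigenvectorBasis x, Finset.mul_sum]
  refine Finset.sum_le_sum fun i _ => ?_
  by_cases hi : i ∈ S
  · exact mul_le_mul_of_nonneg_right (hc i hi) (sq_nonneg _)
  · rw [repr_zero _ _ hx hi]; simp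

lemma finrank_span (b : OrthonormalBasis (Fin n) ℝ (EuclideanSpace ℝ (Fin n)))
    (S : Finset (Fin n)) :
    Module.finrank ℝ (Submodule.span ℝ (b '' (S : Set (Fin n)))) = S.card := by
  have hli : LinearIndependent ℝ (fun i : {i // i ∈ S} => b i) :=
    b.orthonormal.linearIndependent.comp _ Subtype.val_injective
  have := finrank_span_eq_card hli
  have hr : (Set.range fun i : {i // i ∈ S} => b ↑i) = b '' (S : Set (Fin n)) := by
    ext y; simp [Set.mem_image]
  rw [hr] at this
  rw [this, Fintype.card_coe]

lemma weyl_one_sided (A B : Matrix (Fin n) (Fin n) ℝ) (hA : A.IsHermitian) (hB : B.IsHermitian)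
    (ℓ : Fin n) :
    sortedEigenvalues hA ℓ ≤ sortedEigenvalues hB ℓ + ‖A - B‖ := by
  classical
  set σA := Tuple.sort hA.eigenvalues with hσA
  set σB := Tuple.sort hB.eigenvalues with hσB
  set SA : Finset (Fin n) := (Finset.Ici ℓ).image σA with hSA
  set SB : Finset (Fin n) := (Finset.Iic ℓ).image σB with hSB
  set U := Submodule.span ℝ (hA.eigenvectorBasis '' (SA : Set (Fin n))) with hU
  set W := Submodule.span ℝ (hB.eigenvectorBasis '' (SB : Set (Fin n))) with hW
  have hcardA : SA.card = n - ℓ := by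
    rw [hSA, Finset.card_image_of_injective _ σA.injective, Fin.card_Ici]
  have hcardB : SB.card = ℓ + 1 := by
    rw [hSB, Finset.card_image_of_injective _ σB.injective, Fin.card_Iic]
  have hdim : 0 < Module.finrank ℝ ↥(U ⊓ W) := by
    have h1 := Submodule.finrank_sup_add_finrank_inf_eq U W
    have fU : Module.finrank ℝ U = n - ℓ := by rw [hU, finrank_span, hcardA]
    have fW : Module.finrank ℝ W = ℓ + 1 := by rw [hW, finrank_span, hcardB]
    rw [fU, fW] at h1
    have h2 : Module.finrank ℝ ↥(U ⊔ W) ≤ n := by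
      have := Submodule.finrank_le (U ⊔ W)
      simpa using this
    have hln : (ℓ : ℕ) < n := ℓ.isLt
    omega
  have hne : (U ⊓ W) ≠ ⊥ := by
    intro h; rw [h] at hdim; simp at hdim
  obtain ⟨x, hx, hx0⟩ := Submodule.exists_mem_ne_zero_of_ne_bot hne
  have hxU : x ∈ U := hx.1
  have hxW : x ∈ W := hx.2
  have hgeA : sortedEigenvalues hA ℓ * ‖x‖ ^ 2 ≤ ⟪x, Matrix.toEuclideanLin A x⟫_ℝ := by
    refine quad_ge hA SA _ (fun i hi => ?_) hxU
    rw [hSA] at hi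
    obtain ⟨j, hj, rfl⟩ := Finset.mem_image.1 hi
    exact Tuple.monotone_sort hA.eigenvalues (Finset.mem_Ici.1 hj)
  have hleB : ⟪x, Matrix.toEuclideanLin B x⟫_ℝ ≤ sortedEigenvalues hB ℓ * ‖x‖ ^ 2 := by
    refine quad_le hB SB _ (fun i hi => ?_) hxW
    rw [hSB] at hi
    obtain ⟨j, hj, rfl⟩ := Finset.mem_image.1 hi
    exact Tuple.monotone_sort hB.eigenvalues (Finset.mem_Iic.1 hj)
  have hpert : ⟪x, Matrix.toEuclideanLin (A - B) x⟫_ℝ ≤ ‖A - B‖ * ‖x‖ ^ 2 := by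
    calc ⟪x, Matrix.toEuclideanLin (A - B) x⟫_ℝ
        ≤ ‖x‖ * ‖Matrix.toEuclideanLin (A - B) x‖ := real_inner_le_norm _ _
      _ ≤ ‖x‖ * (‖A - B‖ * ‖x‖) :=
          mul_le_mul_of_nonneg_left ((A - B).l2_opNorm_mulVec x) (norm_nonneg _)
      _ = ‖A - B‖ * ‖x‖ ^ 2 := by ring
  have hsplit : Matrix.toEuclideanLin (A - B) x
      = Matrix.toEuclideanLin A x - Matrix.toEuclideanLin B x := by rw [map_sub]; rfl
  have hinner : ⟪x, Matrix.toEuclideanLin A x⟫_ℝ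
      = ⟪x, Matrix.toEuclideanLin B x⟫_ℝ + ⟪x, Matrix.toEuclideanLin (A - B) x⟫_ℝ := by
    rw [hsplit, inner_sub_right]; ring
  have hx2 : 0 < ‖x‖ ^ 2 := pow_pos (norm_pos_iff.mpr hx0) 2
  nlinarith [hgeA, hleB, hpert, hinner, hx2]

lemma weyl (A B : Matrix (Fin n) (Fin n) ℝ) (hA : A.IsHermitian) (hB : B.IsHermitian)
    (ℓ : Fin n) :
    |sortedEigenvalues hA ℓ - sortedEigenvalues hB ℓ| ≤ ‖A - B‖ := by
  rw [abs_sub_le_iff]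
  constructor
  · linarith [weyl_one_sided A B hA hB ℓ]
  · have := weyl_one_sided B A hB hA ℓ
    rw [norm_sub_rev] at this
    linarith

lemma opnorm_le {m k : Type*} [Fintype m] [Fintype k] [DecidableEq k]
    (A : Matrix m k ℝ) {c : ℝ} (hc : 0 ≤ c)
    (h : ∀ x : EuclideanSpace ℝ k, ‖Matrix.toEuclideanLin A x‖ ≤ c * ‖x‖) :
    ‖A‖ ≤ c := by
  rw [Matrix.l2_opNorm_def]
  exact ContinuousLinearMap.opNorm_le_bound _ hc h

end ProjectedWeylAux

/-- **Projected Weyl envelope.**  With `C = M_yy⁻¹ M_yx`, `T = [I_p; −C]`, and sorted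
eigenvalues, `|λ_ℓ(TᵀMT) − λ_ℓ(TᵀM'T)| ≤ (1 + ‖M_xy‖·‖M_yy⁻¹‖)²·‖M − M'‖` for every
`ℓ ∈ {1, …, p}`. -/
theorem projected_weyl_envelope
    {p d : ℕ}
    (M M' : Matrix (Fin p ⊕ Fin d) (Fin p ⊕ Fin d) ℝ)
    (Mxx : Matrix (Fin p) (Fin p) ℝ) (Mxy : Matrix (Fin p) (Fin d) ℝ)
    (Myx : Matrix (Fin d) (Fin p) ℝ) (Myy : Matrix (Fin d) (Fin d) ℝ)
    (Mxx' : Matrix (Fin p) (Fin p) ℝ) (Mxy' : Matrix (Fin p) (Fin d) ℝ)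
    (Myx' : Matrix (Fin d) (Fin p) ℝ) (Myy' : Matrix (Fin d) (Fin d) ℝ)
    (hM : M = Matrix.fromBlocks Mxx Mxy Myx Myy)
    (hM' : M' = Matrix.fromBlocks Mxx' Mxy' Myx' Myy')
    (hMsymm : M.IsHermitian) (hM'symm : M'.IsHermitian)
    (hMyy : IsUnit Myy)
    -- T = [I_p; −C] with C = M_yy⁻¹ M_yx
    (T : Matrix (Fin p ⊕ Fin d) (Fin p) ℝ)
    (hT : T = Matrix.fromRows (1 : Matrix (Fin p) (Fin p) ℝ) (-(Myy⁻¹ * Myx)))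
    -- the restricted matrices TᵀMT and TᵀM'T are symmetric
    (hS : (T.transpose * M * T).IsHermitian)
    (hS' : (T.transpose * M' * T).IsHermitian) :
    ∀ ℓ : Fin p,
      |sortedEigenvalues hS ℓ - sortedEigenvalues hS' ℓ|
        ≤ (1 + ‖Mxy‖ * ‖Myy⁻¹‖) ^ 2 * ‖M - M'‖ := by
  intro ℓ
  have hW := ProjectedWeylAux.weyl _ _ hS hS' ℓ
  have hsub : T.transpose * M * T - T.transpose * M' * T = T.transpose * (M - M') * T := by
    rw [Matrix.mul_sub, Matrix.sub_mul]
  -- Myx = Mxyᵀ from symmetry of M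
  have hMyx : Myx = Mxy.transpose := by
    ext i j
    have h1 : M.transpose = M := by
      have := hMsymm
      rwa [Matrix.IsHermitian, Matrix.conjTranspose_eq_transpose_of_trivial] at this
    have h2 := congrFun (congrFun h1 (Sum.inr i)) (Sum.inl j)
    simpa [hM, Matrix.transpose_apply] using h2.symm
  have hMyxnorm : ‖Myx‖ = ‖Mxy‖ := by
    rw [hMyx, ← Matrix.conjTranspose_eq_transpose_of_trivial, Matrix.l2_opNorm_conjTranspose]
  -- bound on ‖T‖
  set C : Matrix (Fin d) (Fin p) ℝ := Myy⁻¹ * Myx with hC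
  have hCnorm : ‖C‖ ≤ ‖Mxy‖ * ‖Myy⁻¹‖ := by
    calc ‖C‖ ≤ ‖Myy⁻¹‖ * ‖Myx‖ := Matrix.l2_opNorm_mul _ _
      _ = ‖Mxy‖ * ‖Myy⁻¹‖ := by rw [hMyxnorm]; ring
  have hTnorm : ‖T‖ ≤ 1 + ‖C‖ := by
    refine ProjectedWeylAux.opnorm_le T (by positivity) fun x => ?_
    set u : EuclideanSpace ℝ (Fin d) := Matrix.toEuclideanLin (-C) x with hu
    have hentries : ∀ i : Fin p ⊕ Fin d,
        (Matrix.toEuclideanLin T x) i = Sum.elim (x : Fin p → ℝ) (u : Fin d → ℝ) i := by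
      intro i
      simp only [hT, Matrix.toEuclideanLin_apply, hu]
      rw [Matrix.fromRows_mulVec, Matrix.one_mulVec]
    have hsq : ‖Matrix.toEuclideanLin T x‖ ^ 2 = ‖x‖ ^ 2 + ‖u‖ ^ 2 := by
      rw [EuclideanSpace.norm_eq, Real.sq_sqrt (by positivity),
        EuclideanSpace.norm_eq (x := x), Real.sq_sqrt (by positivity),
        EuclideanSpace.norm_eq (x := u), Real.sq_sqrt (by positivity)]
      rw [Fintype.sum_sum_type]
      congr 1
      · exact Finset.sum_congr rfl fun i _ => by rw [hentries (Sum.inl i)]; rfl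
      · exact Finset.sum_congr rfl fun i _ => by rw [hentries (Sum.inr i)]; rfl
    have hub : ‖u‖ ≤ ‖C‖ * ‖x‖ := by
      have := (-C).l2_opNorm_mulVec x
      rwa [norm_neg] at this
    have h0 : (0:ℝ) ≤ ‖Matrix.toEuclideanLin T x‖ := norm_nonneg _
    have h1 : (0:ℝ) ≤ ‖x‖ := norm_nonneg _
    have h2 : (0:ℝ) ≤ ‖C‖ := norm_nonneg _
    have h3 : (0:ℝ) ≤ ‖u‖ := norm_nonneg _
    nlinarith [hsq, hub, h0, h1, h2, h3]
  -- ‖Tᵀ‖ = ‖T‖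
  have hTt : ‖T.transpose‖ = ‖T‖ := by
    rw [← Matrix.conjTranspose_eq_transpose_of_trivial, Matrix.l2_opNorm_conjTranspose]
  have hbound : ‖T.transpose * M * T - T.transpose * M' * T‖
      ≤ (1 + ‖Mxy‖ * ‖Myy⁻¹‖) ^ 2 * ‖M - M'‖ := by
    rw [hsub]
    calc ‖T.transpose * (M - M') * T‖
        ≤ ‖T.transpose * (M - M')‖ * ‖T‖ := Matrix.l2_opNorm_mul _ _
      _ ≤ (‖T.transpose‖ * ‖M - M'‖) * ‖T‖ :=
          mul_le_mul_of_nonneg_right (Matrix.l2_opNorm_mul _ _) (norm_nonneg _)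
      _ ≤ (1 + ‖Mxy‖ * ‖Myy⁻¹‖) ^ 2 * ‖M - M'‖ := by
          rw [hTt]
          have hTK : ‖T‖ ≤ 1 + ‖Mxy‖ * ‖Myy⁻¹‖ := le_trans hTnorm (by linarith)
          have h0 : (0:ℝ) ≤ ‖T‖ := norm_nonneg _
          have h1 : (0:ℝ) ≤ ‖M - M'‖ := norm_nonneg _
          have hsq : ‖T‖ * ‖T‖ ≤ (1 + ‖Mxy‖ * ‖Myy⁻¹‖) * (1 + ‖Mxy‖ * ‖Myy⁻¹‖) :=
            mul_le_mul hTK hTK h0 (by positivity)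
          nlinarith [mul_le_mul_of_nonneg_right hsq h1]
  exact le_trans hW hbound
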